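/- arXiv:1101.1936 — 2 statements merged into one kernel-verified Lean document; each statement's English description precedes it below -/
import Mathlib

section
/- For any right artinian ring R, φ-dim(R) ≤ gl.dim(R), i.e. the supremum of the Igusa–Todorov function φ over finitely generated right R-modules is at most the global dimension of R. -/
open Module Function

universe u

variable (R : Type u) [Ring R]

/-- A finitely generated right `R`-module, encoded as a module over `Rᵐᵒᵖ`. -/
structure FGMod where
  carrier : Type u
  [isAddCommGroup : AddCommGroup carrier]
  [isModule : Module Rᵐᵒᵖ carrier]
  [isFinite : Module.Finite Rᵐᵒᵖ carrier]

attribute [instance] FGMod.isAddCommGroup FGMod.isModule FGMod.isFinite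

instance : CoeSort (FGMod R) (Type u) := ⟨FGMod.carrier⟩

variable {R}

/-- Isomorphism of f.g. right modules. -/
def FGMod.Iso (M N : FGMod R) : Prop := Nonempty (M ≃ₗ[Rᵐᵒᵖ] N)

/-- Direct sum. -/
def FGMod.prod (M N : FGMod R) : FGMod R := ⟨M × N⟩

/-- `M^k`, the direct sum of `k` copies of `M`. -/
def FGMod.pow (M : FGMod R) (k : ℕ) : FGMod R := ⟨Fin k → M⟩

/-- `N` is (isomorphic to) a direct summand of `M`. -/
def FGMod.IsSummand (N M : FGMod R) : Prop :=
  ∃ A B : Submodule Rᵐᵒᵖ M, IsCompl A B ∧ Nonempty (N ≃ₗ[Rᵐᵒᵖ] A)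

/-- `M` is indecomposable. -/
def FGMod.Indec (M : FGMod R) : Prop :=
  Nontrivial M ∧ ∀ A B : Submodule Rᵐᵒᵖ M, IsCompl A B → A = ⊥ ∨ B = ⊥

/-- `M` is projective. -/
def FGMod.Proj (M : FGMod R) : Prop := Module.Projective Rᵐᵒᵖ M

/-- `f : P → M` is a projective cover: `P` projective, `f` surjective with superfluous kernel. -/
def IsProjCover (M P : FGMod R) (f : P →ₗ[Rᵐᵒᵖ] M) : Prop :=
  P.Proj ∧ Surjective f ∧ ∀ N : Submodule Rᵐᵒᵖ P, N ⊔ LinearMap.ker f = ⊤ → N = ⊤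

/-- `N` is a (first) syzygy of `M`: the kernel of a projective cover of `M`. -/
def IsSyzygy (M N : FGMod R) : Prop :=
  ∃ (P : FGMod R) (f : P →ₗ[Rᵐᵒᵖ] M),
    IsProjCover M P f ∧ Nonempty (N ≃ₗ[Rᵐᵒᵖ] LinearMap.ker f)

/-- `N` is an `n`-th syzygy of `M`. -/
def IsSyzygyN : ℕ → FGMod R → FGMod R → Prop
  | 0, M, N => M.Iso N
  | n+1, M, N => ∃ L, IsSyzygy M L ∧ IsSyzygyN n L N

/-- `M` has projective dimension at most `n`. -/
def HasPdLE : ℕ → FGMod R → Prop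
  | 0, M => M.Proj
  | n+1, M => M.Proj ∨ ∃ N, IsSyzygy M N ∧ HasPdLE n N

/-- `M` has finite projective dimension. -/
def FinPd (M : FGMod R) : Prop := ∃ n, HasPdLE n M

/-- The projective dimension of `M` (junk value if infinite). -/
noncomputable def pdIT (M : FGMod R) : ℕ := sInf {n | HasPdLE n M}

variable (R)

/-- The Igusa–Todorov relations in the free abelian group on f.g. right modules:
`[A] - [B] - [C]` whenever `A ≅ B ⊕ C`, and `[P]` for `P` projective. -/
def ITRel : Set (FreeAbelianGroup (FGMod R)) :=
  {x | ∃ A B C : FGMod R, Nonempty (A ≃ₗ[Rᵐᵒᵖ] (B × C : Type u)) ∧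
        x = FreeAbelianGroup.of A - FreeAbelianGroup.of B - FreeAbelianGroup.of C} ∪
  {x | ∃ P : FGMod R, P.Proj ∧ x = FreeAbelianGroup.of P}

/-- The Igusa–Todorov group `K`. -/
def ITK := FreeAbelianGroup (FGMod R) ⧸ AddSubgroup.closure (ITRel R)

noncomputable instance : AddCommGroup (ITK R) :=
  QuotientAddGroup.Quotient.addCommGroup _

/-- The class `[M]` in `K`. -/
noncomputable def ITcls (M : FGMod R) : ITK R := QuotientAddGroup.mk (FreeAbelianGroup.of M)

/-- `⟨M⟩`: the subgroup of `K` generated by the indecomposable non-projective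
direct summands of `M`. -/
noncomputable def ITgen (M : FGMod R) : AddSubgroup (ITK R) :=
  AddSubgroup.closure
    {x | ∃ N : FGMod R, N.IsSummand M ∧ N.Indec ∧ ¬N.Proj ∧ x = ITcls R N}

/-- The rank of a subgroup of `K`. -/
noncomputable def rkIT (H : AddSubgroup (ITK R)) : ℕ :=
  Module.finrank ℤ (AddSubgroup.toIntSubmodule H)

/-- `OmK` is a syzygy endomorphism of `K`: a group endomorphism sending `[M]` to `[ΩM]`. -/
def IsSyzygyEnd (OmK : AddMonoid.End (ITK R)) : Prop :=
  ∀ M N : FGMod R, IsSyzygy M N → OmK (ITcls R M) = ITcls R N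

/-- The Igusa–Todorov function `φ`: the least `n` such that the rank of
`Ω^i⟨M⟩` equals that of `Ω^n⟨M⟩` for all `i ≥ n`. -/
noncomputable def phiIT (OmK : AddMonoid.End (ITK R)) (M : FGMod R) : ℕ :=
  sInf {n | ∀ i, n ≤ i →
    rkIT R ((ITgen R M).map ((OmK ^ i : AddMonoid.End (ITK R)) : ITK R →+ ITK R))
      = rkIT R ((ITgen R M).map ((OmK ^ n : AddMonoid.End (ITK R)) : ITK R →+ ITK R))}

/-- The second Igusa–Todorov function `ψ`. -/
noncomputable def psiIT (OmK : AddMonoid.End (ITK R)) (M : FGMod R) : ℕ :=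
  phiIT R OmK M + sSup {d | ∃ N X : FGMod R, IsSyzygyN (phiIT R OmK M) M N ∧
      X.IsSummand N ∧ FinPd X ∧ d = pdIT X}

/-- The socle of a module: the sum of its simple submodules. -/
def socleIT (M : FGMod R) : Submodule Rᵐᵒᵖ M :=
  sSup {S : Submodule Rᵐᵒᵖ M | IsSimpleModule Rᵐᵒᵖ S}


section Aux

variable {R}

/-- The zero module as a f.g. module. -/
def trivFGMod : FGMod R := ⟨PUnit⟩

lemma trivFGMod_proj : (trivFGMod : FGMod R).Proj := by
  unfold FGMod.Proj trivFGMod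
  infer_instance

instance : Subsingleton (trivFGMod : FGMod R).carrier := by
  unfold trivFGMod; infer_instance

/-- A projective module has pd ≤ n for every n. -/
lemma hasPdLE_of_proj {M : FGMod R} (h : M.Proj) : ∀ n, HasPdLE n M
  | 0 => h
  | _+1 => Or.inl h

/-- The identity is a projective cover of a projective module, so the zero module is
a syzygy of any projective module. -/
lemma isSyzygy_triv_of_proj {M : FGMod R} (h : M.Proj) : IsSyzygy M trivFGMod := by
  refine ⟨M, LinearMap.id, ⟨h, Function.surjective_id, ?_⟩, ?_⟩
  · intro N hN
    simpa [LinearMap.ker_id] using hN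
  · have hs : Subsingleton (LinearMap.ker (LinearMap.id : M →ₗ[Rᵐᵒᵖ] M)) := by
      rw [LinearMap.ker_id]
      infer_instance
    exact ⟨LinearEquiv.ofSubsingleton _ _⟩

/-- If `M` has pd ≤ n, then some `n`-th syzygy of `M` is projective. -/
lemma exists_proj_syzygyN : ∀ (n : ℕ) (M : FGMod R), HasPdLE n M →
    ∃ N, IsSyzygyN n M N ∧ N.Proj
  | 0, M, h => ⟨M, ⟨LinearEquiv.refl _ _⟩, h⟩
  | n+1, M, h => by
    rcases h with h | ⟨L, hs, hL⟩
    · obtain ⟨N, hN, hNp⟩ := exists_proj_syzygyN n trivFGMod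
        (hasPdLE_of_proj trivFGMod_proj n)
      exact ⟨N, ⟨trivFGMod, isSyzygy_triv_of_proj h, hN⟩, hNp⟩
    · obtain ⟨N, hN, hNp⟩ := exists_proj_syzygyN n L hL
      exact ⟨N, ⟨L, hs, hN⟩, hNp⟩

/-- Isomorphic modules have the same class in `K`. -/
lemma itcls_eq_of_iso {M N : FGMod R} (h : M.Iso N) : ITcls R M = ITcls R N := by
  obtain ⟨e⟩ := h
  have e' : M ≃ₗ[Rᵐᵒᵖ] ((N × (trivFGMod : FGMod R)) : Type u) :=
    e.trans
      { toFun := fun b => (b, PUnit.unit)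
        invFun := Prod.fst
        map_add' := fun _ _ => rfl
        map_smul' := fun _ _ => rfl
        left_inv := fun _ => rfl
        right_inv := fun x => by
          refine Prod.ext rfl ?_
          exact Subsingleton.elim _ _ }
  have h1 : FreeAbelianGroup.of M - FreeAbelianGroup.of N
      - FreeAbelianGroup.of (trivFGMod : FGMod R) ∈ AddSubgroup.closure (ITRel R) :=
    AddSubgroup.subset_closure (Or.inl ⟨M, N, trivFGMod, ⟨e'⟩, rfl⟩)
  have h2 : FreeAbelianGroup.of (trivFGMod : FGMod R) ∈ AddSubgroup.closure (ITRel R) :=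
    AddSubgroup.subset_closure (Or.inr ⟨trivFGMod, trivFGMod_proj, rfl⟩)
  have h3 : FreeAbelianGroup.of M - FreeAbelianGroup.of N ∈
      AddSubgroup.closure (ITRel R) := by
    have := AddSubgroup.add_mem _ h1 h2
    simpa using this
  exact (QuotientAddGroup.eq_iff_sub_mem).2 h3

/-- The class of a projective module is `0` in `K`. -/
lemma itcls_eq_zero_of_proj {P : FGMod R} (h : P.Proj) : ITcls R P = 0 :=
  (QuotientAddGroup.eq_zero_iff _).2
    (AddSubgroup.subset_closure (Or.inr ⟨P, h, rfl⟩))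

/-- A syzygy endomorphism sends `[M]` to `[Ω^n M]`. -/
lemma omK_pow_itcls {OmK : AddMonoid.End (ITK R)} (hOm : IsSyzygyEnd R OmK) :
    ∀ (n : ℕ) (M N : FGMod R), IsSyzygyN n M N →
      (OmK ^ n) (ITcls R M) = ITcls R N
  | 0, M, N, h => itcls_eq_of_iso h
  | n+1, M, N, h => by
    obtain ⟨L, hL, hLN⟩ := h
    have : (OmK ^ (n+1)) (ITcls R M) = (OmK ^ n) (OmK (ITcls R M)) := by
      rw [pow_succ]; rfl
    rw [this, hOm M L hL]
    exact omK_pow_itcls hOm n L N hLN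

end Aux

/-- `φ-dim(R) ≤ gl.dim(R)`: if every f.g. right `R`-module has
projective dimension at most `d`, then `φ(M) ≤ d` for all f.g. `M`. -/
theorem phidim_le_gldim (R : Type u) [Ring R] [IsArtinianRing Rᵐᵒᵖ]
    (OmK : AddMonoid.End (ITK R)) (hOm : IsSyzygyEnd R OmK)
    (d : ℕ) (hgl : ∀ M : FGMod R, HasPdLE d M) :
    ∀ M : FGMod R, phiIT R OmK M ≤ d := by
  intro M
  -- key: for j ≥ d, the image of ⟨M⟩ under Ω^j is trivial
  have key : ∀ j, d ≤ j →
      (ITgen R M).map ((OmK ^ j : AddMonoid.End (ITK R)) : ITK R →+ ITK R) = ⊥ := by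
    intro j hj
    rw [ITgen]
    refine (AddMonoidHom.map_closure ((OmK ^ j : AddMonoid.End (ITK R)) : ITK R →+ ITK R) _).trans ?_
    rw [eq_bot_iff, AddSubgroup.closure_le]
    rintro _ ⟨x, ⟨N, -, -, -, rfl⟩, rfl⟩
    obtain ⟨P, hsyz, hP⟩ := exists_proj_syzygyN d N (hgl N)
    have hd : (OmK ^ d) (ITcls R N) = 0 := by
      rw [omK_pow_itcls hOm d N P hsyz, itcls_eq_zero_of_proj hP]
    have hsplit : (OmK ^ j) (ITcls R N)
        = (OmK ^ (j - d)) ((OmK ^ d) (ITcls R N)) := by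
      have hpow : OmK ^ j = OmK ^ (j - d) * OmK ^ d := by
        rw [← pow_add, Nat.sub_add_cancel hj]
      rw [hpow]
      rfl
    have : (OmK ^ j) (ITcls R N) = 0 := by
      rw [hsplit, hd]
      exact map_zero _
    exact (AddSubgroup.mem_bot).2 this
  apply Nat.sInf_le
  intro i hi
  rw [key i hi, key d le_rfl]
end

section
/- Let R be a right artinian right self-injective ring and M₁, M₂ finitely generated right R-modules with no projective direct summands. If Ω^n M₁ ≅ Ω^n M₂ for some n ≥ 0, then M₁ ≅ M₂. -/
open Module Function

universe u

variable (R : Type u) [Ring R]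

variable {R}

variable (R)

section Aux
variable {S : Type u} [Ring S]

/-- `X` is essential in `E` (both submodules of an ambient module `P`). -/
def EssIn {P : Type u} [AddCommGroup P] [Module S P] (X E : Submodule S P) : Prop :=
  X ≤ E ∧ ∀ Y : Submodule S P, Y ≤ E → Y ⊓ X = ⊥ → Y = ⊥

theorem injective_of_retract {Q M : Type u} [AddCommGroup Q] [Module S Q] [AddCommGroup M]
    [Module S M] (hQ : Module.Injective S Q) (i : M →ₗ[S] Q) (r : Q →ₗ[S] M)
    (hri : ∀ m, r (i m) = m) : Module.Injective S M := by
  constructor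
  intro X Y _ _ _ _ f hf g
  obtain ⟨h, hh⟩ := hQ.out f hf (i ∘ₗ g)
  exact ⟨r ∘ₗ h, fun x => by simp [hh x, hri]⟩

theorem injective_pi (hS : Module.Injective S S) (n : ℕ) :
    Module.Injective S (Fin n → S) := by
  constructor
  intro X Y _ _ _ _ f hf g
  have H : ∀ i : Fin n, ∃ h : Y →ₗ[S] S, ∀ x, h (f x) = ((LinearMap.proj i : (Fin n → S) →ₗ[S] S) ∘ₗ g) x :=
    fun i => hS.out f hf ((LinearMap.proj i : (Fin n → S) →ₗ[S] S) ∘ₗ g)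
  choose h hh using H
  exact ⟨LinearMap.pi h, fun x => funext fun i => hh i x⟩

theorem injective_of_fg_projective {M : Type u} [AddCommGroup M] [Module S M]
    [Module.Finite S M] (hM : Module.Projective S M) (hS : Module.Injective S S) :
    Module.Injective S M := by
  obtain ⟨n, π, hπ⟩ := Module.Finite.exists_fin' S M
  haveI := hM
  obtain ⟨s, hs⟩ := Module.projective_lifting_property π (LinearMap.id) hπ
  exact injective_of_retract (injective_pi hS n) s π (fun m => LinearMap.congr_fun hs m)

theorem isCompl_of_injective_submodule {P : Type u} [AddCommGroup P] [Module S P]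
    (E : Submodule S P) (hE : Module.Injective S E) : ∃ C, IsCompl E C := by
  obtain ⟨r, hr⟩ := hE.out E.subtype E.injective_subtype LinearMap.id
  refine ⟨LinearMap.ker (E.subtype ∘ₗ r), ⟨?_, ?_⟩⟩
  · rw [disjoint_iff, eq_bot_iff]
    rintro x ⟨hxE, hxK⟩
    have h1 : r x = ⟨x, hxE⟩ := by
      have := hr ⟨x, hxE⟩
      simpa using this
    have h2 : (r x : P) = 0 := hxK
    rw [h1] at h2
    simpa using h2
  · rw [codisjoint_iff, eq_top_iff]
    intro p _
    have hk : p - (r p : P) ∈ LinearMap.ker (E.subtype ∘ₗ r) := by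
      have : r (p - (r p : P)) = r p - r ((r p : P)) := by
        rw [map_sub]
      have h2 : r ((r p : P)) = r p := by simpa using hr (r p)
      simp only [LinearMap.mem_ker, LinearMap.comp_apply, this, h2, sub_self]
      simp
    have : p = ((r p : P)) + (p - (r p : P)) := by abel
    rw [this]
    exact Submodule.add_mem_sup (r p).2 hk

theorem essIn_self {P : Type u} [AddCommGroup P] [Module S P] (X : Submodule S P) :
    EssIn X X :=
  ⟨le_rfl, fun Y hY h => by rwa [inf_eq_left.mpr hY] at h⟩

theorem exists_injhull {P : Type u} [AddCommGroup P] [Module S P] (hP : Module.Injective S P)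
    (X : Submodule S P) : ∃ E C : Submodule S P, EssIn X E ∧ IsCompl E C := by
  classical
  obtain ⟨E, hXE, hEmem, hEmax⟩ :
      ∃ E, X ≤ E ∧ EssIn X E ∧ ∀ ⦃E'⦄, EssIn X E' → E ≤ E' → E' ≤ E := by
    obtain ⟨E, hXE, hE⟩ := zorn_le_nonempty₀ {E : Submodule S P | EssIn X E}
      (fun c hcs hchain y hyc => by
        refine ⟨sSup c, ⟨?_, ?_⟩, fun z hz => le_sSup hz⟩
        · exact le_trans (hcs hyc).1 (le_sSup hyc)
        · intro Y hY hYX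
          rw [eq_bot_iff]
          intro v hv
          have hvs : v ∈ sSup c := hY hv
          obtain ⟨E', hE'c, hvE'⟩ := (Submodule.mem_sSup_of_directed ⟨y, hyc⟩
            hchain.directedOn).mp hvs
          have hZ : Y ⊓ E' = ⊥ := (hcs hE'c).2 (Y ⊓ E') inf_le_right
            (eq_bot_iff.mpr (le_trans (inf_le_inf_right X inf_le_left) hYX.le))
          have hvb : v ∈ Y ⊓ E' := Submodule.mem_inf.mpr ⟨hv, hvE'⟩
          rw [hZ] at hvb
          exact hvb)
      X (essIn_self X)
    exact ⟨E, hXE, hE.1, fun E' h1 h2 => hE.2 h1 h2⟩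
  obtain ⟨C, hCdis, hCmax⟩ : ∃ C : Submodule S P, E ⊓ C = ⊥ ∧
      ∀ ⦃C'⦄, E ⊓ C' = ⊥ → C ≤ C' → C' ≤ C := by
    obtain ⟨C, _, hC⟩ := zorn_le_nonempty₀ {C : Submodule S P | E ⊓ C = ⊥}
      (fun c hcs hchain y hyc => by
        refine ⟨sSup c, ?_, fun z hz => le_sSup hz⟩
        rw [Set.mem_setOf_eq, eq_bot_iff]
        intro v hv
        obtain ⟨hvE, hvs⟩ := Submodule.mem_inf.mp hv
        obtain ⟨C', hC'c, hvC'⟩ := (Submodule.mem_sSup_of_directed ⟨y, hyc⟩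
          hchain.directedOn).mp hvs
        have h' : E ⊓ C' = ⊥ := hcs hC'c
        have hvb : v ∈ E ⊓ C' := Submodule.mem_inf.mpr ⟨hvE, hvC'⟩
        rw [h'] at hvb
        exact hvb)
      ⊥ (by simp)
    exact ⟨C, hC.1, fun C' h1 h2 => hC.2 h1 h2⟩
  set q := C.mkQ with hq
  have hquotEss : ∀ D : Submodule S (P ⧸ C), D ⊓ Submodule.map q E = ⊥ → D = ⊥ := by
    intro D hD
    have hDE : E ⊓ Submodule.comap q D = ⊥ := by
      rw [eq_bot_iff]
      intro x hx
      obtain ⟨hxE, hxD⟩ := Submodule.mem_inf.mp hx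
      have h1 : q x ∈ D ⊓ Submodule.map q E :=
        Submodule.mem_inf.mpr ⟨hxD, Submodule.mem_map_of_mem hxE⟩
      rw [hD] at h1
      have h2 : (x : P) ∈ C := (Submodule.Quotient.mk_eq_zero C).mp ((Submodule.mem_bot S).mp h1)
      rw [← hCdis]
      exact Submodule.mem_inf.mpr ⟨hxE, h2⟩
    have hC_le : C ≤ Submodule.comap q D := by
      intro x hx
      have hx0 : q x = 0 := (Submodule.Quotient.mk_eq_zero C).mpr hx
      simp only [Submodule.mem_comap, hx0]
      exact Submodule.zero_mem D
    have hle : Submodule.comap q D ≤ C := hCmax hDE hC_le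
    rw [eq_bot_iff]
    intro d hd
    obtain ⟨x, rfl⟩ := Submodule.mkQ_surjective C d
    have hx : x ∈ Submodule.comap q D := hd
    have hxC : x ∈ C := hle hx
    have : q x = 0 := (Submodule.Quotient.mk_eq_zero C).mpr hxC
    rw [show C.mkQ x = q x from rfl, this]
    exact Submodule.zero_mem ⊥
  have e0inj : Function.Injective (q ∘ₗ E.subtype) := by
    rw [← LinearMap.ker_eq_bot, eq_bot_iff]
    intro x hx
    have h1 : (x : P) ∈ C := (Submodule.Quotient.mk_eq_zero C).mp hx
    have h2 : (x : P) ∈ E ⊓ C := Submodule.mem_inf.mpr ⟨x.2, h1⟩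
    rw [hCdis] at h2
    have : (x : P) = 0 := (Submodule.mem_bot S).mp h2
    exact (Submodule.mem_bot S).mpr (Subtype.ext this)
  obtain ⟨h, hh⟩ := hP.out (q ∘ₗ E.subtype) e0inj E.subtype
  set g : P →ₗ[S] P := h ∘ₗ q with hgdef
  have hgE : ∀ x : P, x ∈ E → g x = x := fun x hx => hh ⟨x, hx⟩
  have hinjh : Function.Injective h := by
    rw [← LinearMap.ker_eq_bot]
    refine hquotEss _ ?_
    rw [eq_bot_iff]
    intro z hz
    obtain ⟨hzk, hzE⟩ := Submodule.mem_inf.mp hz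
    obtain ⟨x, hxE, rfl⟩ := Submodule.mem_map.mp hzE
    have hhx : h (q x) = x := hh ⟨x, hxE⟩
    have hx0 : x = 0 := by rw [← hhx]; exact hzk
    rw [show C.mkQ x = q x from rfl, hx0, map_zero]
    exact Submodule.zero_mem ⊥
  have hrangeE : LinearMap.range g = E := by
    have hEle : E ≤ LinearMap.range g := fun x hx => ⟨x, hgE x hx⟩
    refine le_antisymm ?_ hEle
    have hEss2 : EssIn X (LinearMap.range g) := by
      refine ⟨le_trans hXE hEle, ?_⟩
      intro Y hY hYX
      have hYE : Y ⊓ E = ⊥ := hEmem.2 (Y ⊓ E) inf_le_right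
        (eq_bot_iff.mpr (le_trans (inf_le_inf_right X inf_le_left) hYX.le))
      have hD : Submodule.comap h Y ⊓ Submodule.map q E = ⊥ := by
        rw [eq_bot_iff]
        intro z hz
        obtain ⟨hz1, hz2⟩ := Submodule.mem_inf.mp hz
        obtain ⟨x, hxE, rfl⟩ := Submodule.mem_map.mp hz2
        have hhx : h (q x) = x := hh ⟨x, hxE⟩
        have hmem : h (q x) ∈ Y ⊓ E := Submodule.mem_inf.mpr ⟨hz1, by rw [hhx]; exact hxE⟩
        rw [hYE] at hmem
        have h0 : h (q x) = 0 := (Submodule.mem_bot S).mp hmem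
        have hqx : q x = 0 := hinjh (by rw [h0, map_zero])
        rw [show C.mkQ x = q x from rfl, hqx]
        exact Submodule.zero_mem ⊥
      have hD0 : Submodule.comap h Y = ⊥ := hquotEss _ hD
      rw [eq_bot_iff]
      intro y hy
      obtain ⟨p, rfl⟩ : ∃ p', g p' = y := hY hy
      have hqp : q p ∈ Submodule.comap h Y := hy
      rw [hD0] at hqp
      have hqp0 : q p = 0 := (Submodule.mem_bot S).mp hqp
      have hg0 : g p = 0 := by
        show h (q p) = 0
        rw [hqp0, map_zero]
      rw [hg0]
      exact Submodule.zero_mem ⊥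
    exact hEmax hEss2 hEle
  refine ⟨E, C, hEmem, ⟨disjoint_iff.mpr hCdis, codisjoint_iff.mpr ?_⟩⟩
  rw [eq_top_iff]
  intro p _
  have hgpE : g p ∈ E := hrangeE ▸ LinearMap.mem_range_self g p
  have hker : p - g p ∈ C := by
    have h1 : g (p - g p) = 0 := by
      rw [map_sub, hgE (g p) hgpE, sub_self]
    have h2 : q (p - g p) = 0 := hinjh (by rw [show h (q (p - g p)) = g (p - g p) from rfl, h1, map_zero])
    exact (Submodule.Quotient.mk_eq_zero C).mp h2
  have hp : p = g p + (p - g p) := by abel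
  rw [hp]
  exact Submodule.add_mem_sup hgpE hker
end Aux

section FG
variable {R : Type u} [Ring R]

theorem ker_essential {M P : FGMod R} (f : P →ₗ[Rᵐᵒᵖ] M) (hc : IsProjCover M P f)
    (h₁ : ∀ N : FGMod R, N.IsSummand M → N.Proj → Subsingleton N)
    (hinj : Module.Injective Rᵐᵒᵖ Rᵐᵒᵖ)
    (X : Submodule Rᵐᵒᵖ P) (hX : X ⊓ LinearMap.ker f = ⊥) : X = ⊥ := by
  have hPinj : Module.Injective Rᵐᵒᵖ P := injective_of_fg_projective hc.1 hinj
  obtain ⟨E, C, hEss, hcompl⟩ := exists_injhull hPinj X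
  have hEker : E ⊓ LinearMap.ker f = ⊥ := by
    refine hEss.2 (E ⊓ LinearMap.ker f) inf_le_left ?_
    rw [eq_bot_iff]
    intro x hx
    obtain ⟨⟨hxE, hxK⟩, hxX⟩ := Submodule.mem_inf.mp hx
    rw [← hX]
    exact Submodule.mem_inf.mpr ⟨hxX, hxK⟩
  -- E is finite and projective
  have eqv : (P ⧸ C) ≃ₗ[Rᵐᵒᵖ] E := Submodule.quotientEquivOfIsCompl C E hcompl.symm
  haveI hfinQ : Module.Finite Rᵐᵒᵖ (P ⧸ C) :=
    Module.Finite.of_surjective C.mkQ (Submodule.mkQ_surjective C)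
  haveI hfinE : Module.Finite Rᵐᵒᵖ E := Module.Finite.equiv eqv
  have hprojE : Module.Projective Rᵐᵒᵖ E := by
    haveI : Module.Projective Rᵐᵒᵖ P := hc.1
    refine Module.Projective.of_split E.subtype (E.projectionOnto C hcompl) ?_
    ext x
    simp [Submodule.projectionOnto_apply_left hcompl]
  have hEinj : Module.Injective Rᵐᵒᵖ E := injective_of_fg_projective hprojE hinj
  -- map E into M
  set fE : E →ₗ[Rᵐᵒᵖ] M := f ∘ₗ E.subtype with hfE
  have hfEinj : Function.Injective fE := by
    rw [← LinearMap.ker_eq_bot, eq_bot_iff]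
    intro x hx
    have h1 : (x : P) ∈ E ⊓ LinearMap.ker f := Submodule.mem_inf.mpr ⟨x.2, hx⟩
    rw [hEker] at h1
    exact (Submodule.mem_bot _).mpr (Subtype.ext ((Submodule.mem_bot _).mp h1))
  set A : Submodule Rᵐᵒᵖ M := LinearMap.range fE with hA
  have eA : E ≃ₗ[Rᵐᵒᵖ] A := LinearEquiv.ofInjective fE hfEinj
  have hAinj : Module.Injective Rᵐᵒᵖ A :=
    injective_of_retract hEinj eA.symm.toLinearMap eA.toLinearMap (fun m => by simp)
  obtain ⟨C', hC'⟩ := isCompl_of_injective_submodule A hAinj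
  haveI hfinA : Module.Finite Rᵐᵒᵖ A := Module.Finite.equiv eA
  set N : FGMod R := ⟨A⟩ with hN
  have hsub : Subsingleton N := by
    refine h₁ N ⟨A, C', hC', ⟨LinearEquiv.refl _ _⟩⟩ (Module.Projective.of_equiv eA)
  have hsubE : Subsingleton E := Equiv.subsingleton eA.toEquiv
  have hEbot : E = ⊥ := by
    rw [eq_bot_iff]
    intro x hx
    have : (⟨x, hx⟩ : E) = 0 := Subsingleton.elim _ _
    exact (Submodule.mem_bot _).mpr (congrArg Subtype.val this)
  rw [eq_bot_iff]
  exact hEbot ▸ hEss.1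

theorem iso_of_ker_iso {M₁ M₂ P₁ P₂ : FGMod R}
    (f₁ : P₁ →ₗ[Rᵐᵒᵖ] M₁) (f₂ : P₂ →ₗ[Rᵐᵒᵖ] M₂)
    (hc₁ : IsProjCover M₁ P₁ f₁) (hc₂ : IsProjCover M₂ P₂ f₂)
    (h₁ : ∀ N : FGMod R, N.IsSummand M₁ → N.Proj → Subsingleton N)
    (h₂ : ∀ N : FGMod R, N.IsSummand M₂ → N.Proj → Subsingleton N)
    (hinj : Module.Injective Rᵐᵒᵖ Rᵐᵒᵖ)
    (e : (LinearMap.ker f₁) ≃ₗ[Rᵐᵒᵖ] (LinearMap.ker f₂)) : M₁.Iso M₂ := by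
  have ess₁ := ker_essential f₁ hc₁ h₁ hinj
  have ess₂ := ker_essential f₂ hc₂ h₂ hinj
  have hP₁inj : Module.Injective Rᵐᵒᵖ P₁ := injective_of_fg_projective hc₁.1 hinj
  have hP₂inj : Module.Injective Rᵐᵒᵖ P₂ := injective_of_fg_projective hc₂.1 hinj
  obtain ⟨g, hg⟩ := hP₂inj.out (LinearMap.ker f₁).subtype
    (Submodule.injective_subtype _) ((LinearMap.ker f₂).subtype ∘ₗ e.toLinearMap)
  -- hg : ∀ x : ker f₁, g ↑x = ↑(e x)
  have hginj : Function.Injective g := by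
    rw [← LinearMap.ker_eq_bot]
    refine ess₁ _ ?_
    rw [eq_bot_iff]
    intro x hx
    obtain ⟨hxg, hxk⟩ := Submodule.mem_inf.mp hx
    have h0 : (e ⟨x, hxk⟩ : P₂) = 0 := by
      have := hg ⟨x, hxk⟩
      simp only [LinearMap.comp_apply, Submodule.coe_subtype, LinearEquiv.coe_coe] at this
      rw [← this]
      exact hxg
    have : (⟨x, hxk⟩ : LinearMap.ker f₁) = 0 := by
      apply e.injective
      exact Subtype.ext (by simpa using h0)
    exact (Submodule.mem_bot _).mpr (congrArg Subtype.val this)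
  set G : Submodule Rᵐᵒᵖ P₂ := LinearMap.range g with hG
  have eG : P₁ ≃ₗ[Rᵐᵒᵖ] G := LinearEquiv.ofInjective g hginj
  have hGinj : Module.Injective Rᵐᵒᵖ G :=
    injective_of_retract hP₁inj eG.symm.toLinearMap eG.toLinearMap (fun m => by simp)
  obtain ⟨C, hC⟩ := isCompl_of_injective_submodule G hGinj
  have hK₂G : LinearMap.ker f₂ ≤ G := by
    intro x hx
    refine ⟨(e.symm ⟨x, hx⟩ : P₁), ?_⟩
    have := hg (e.symm ⟨x, hx⟩)
    simp only [LinearMap.comp_apply, Submodule.coe_subtype, LinearEquiv.coe_coe,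
      LinearEquiv.apply_symm_apply] at this
    exact this
  have hCbot : C = ⊥ := by
    refine ess₂ _ ?_
    rw [eq_bot_iff]
    intro x hx
    obtain ⟨hxC, hxk⟩ := Submodule.mem_inf.mp hx
    have : x ∈ G ⊓ C := Submodule.mem_inf.mpr ⟨hK₂G hxk, hxC⟩
    rw [disjoint_iff.mp hC.disjoint] at this
    exact this
  have hGtop : G = ⊤ := by
    have := hC.codisjoint
    rw [hCbot, codisjoint_bot] at this
    exact this
  have hgsurj : Function.Surjective g := LinearMap.range_eq_top.mp hGtop
  set gE : P₁ ≃ₗ[Rᵐᵒᵖ] P₂ := LinearEquiv.ofBijective g ⟨hginj, hgsurj⟩ with hgE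
  have hmap : Submodule.map (gE : P₁ →ₗ[Rᵐᵒᵖ] P₂) (LinearMap.ker f₁) = LinearMap.ker f₂ := by
    apply le_antisymm
    · rintro _ ⟨x, hx, rfl⟩
      have := hg ⟨x, hx⟩
      simp only [LinearMap.comp_apply, Submodule.coe_subtype] at this
      have hmem : g x ∈ LinearMap.ker f₂ := by rw [this]; exact (e ⟨x, hx⟩).2
      exact hmem
    · intro x hx
      refine ⟨(e.symm ⟨x, hx⟩ : P₁), (e.symm ⟨x, hx⟩).2, ?_⟩
      have := hg (e.symm ⟨x, hx⟩)
      simp only [LinearMap.comp_apply, Submodule.coe_subtype, LinearEquiv.coe_coe,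
        LinearEquiv.apply_symm_apply] at this
      exact this
  have equot : (P₁ ⧸ LinearMap.ker f₁) ≃ₗ[Rᵐᵒᵖ] (P₂ ⧸ LinearMap.ker f₂) :=
    Submodule.Quotient.equiv _ _ gE hmap
  exact ⟨((f₁.quotKerEquivOfSurjective hc₁.2.1).symm.trans equot).trans
    (f₂.quotKerEquivOfSurjective hc₂.2.1)⟩

theorem syzygy_no_proj_summand {M L : FGMod R} (h : IsSyzygy M L)
    (hinj : Module.Injective Rᵐᵒᵖ Rᵐᵒᵖ) :
    ∀ N : FGMod R, N.IsSummand L → N.Proj → Subsingleton N := by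
  obtain ⟨P, f, hc, ⟨φ⟩⟩ := h
  intro N hsum hproj
  obtain ⟨A, B, hAB, ⟨eN⟩⟩ := hsum
  set j : N →ₗ[Rᵐᵒᵖ] P :=
    (LinearMap.ker f).subtype ∘ₗ φ.toLinearMap ∘ₗ A.subtype ∘ₗ eN.toLinearMap with hj
  have hjinj : Function.Injective j := by
    intro a b hab
    exact eN.injective (Subtype.ext (φ.injective (Subtype.ext hab)))
  have hNinj : Module.Injective Rᵐᵒᵖ N := injective_of_fg_projective hproj hinj
  set A'' : Submodule Rᵐᵒᵖ P := LinearMap.range j with hA''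
  have eJ : N ≃ₗ[Rᵐᵒᵖ] A'' := LinearEquiv.ofInjective j hjinj
  have hA''inj : Module.Injective Rᵐᵒᵖ A'' :=
    injective_of_retract hNinj eJ.symm.toLinearMap eJ.toLinearMap (fun m => by simp)
  obtain ⟨C, hC⟩ := isCompl_of_injective_submodule A'' hA''inj
  have hA''ker : A'' ≤ LinearMap.ker f := by
    rintro _ ⟨x, rfl⟩
    exact (φ (A.subtype (eN x))).2
  have hCtop : C = ⊤ := by
    refine hc.2.2 C ?_
    rw [eq_top_iff]
    calc (⊤ : Submodule Rᵐᵒᵖ P) = A'' ⊔ C := (codisjoint_iff.mp hC.codisjoint).symm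
    _ ≤ C ⊔ LinearMap.ker f := sup_le (le_trans hA''ker le_sup_right) le_sup_left
  have hA''bot : A'' = ⊥ := by
    have := disjoint_iff.mp hC.disjoint
    rw [hCtop, inf_top_eq] at this
    exact this
  have : Subsingleton A'' := by rw [hA''bot]; infer_instance
  exact Equiv.subsingleton eJ.toEquiv
end FG

/-- Over a right artinian right self-injective ring, if `M₁, M₂` have
no (nonzero) projective direct summands and `Ωⁿ M₁ ≅ Ωⁿ M₂`, then `M₁ ≅ M₂`. -/
theorem iso_of_syzygy_iso_selfinjective (R : Type u) [Ring R] [IsArtinianRing Rᵐᵒᵖ]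
    (hinj : Module.Injective Rᵐᵒᵖ Rᵐᵒᵖ)
    (M₁ M₂ : FGMod R)
    (h₁ : ∀ N : FGMod R, N.IsSummand M₁ → N.Proj → Subsingleton N)
    (h₂ : ∀ N : FGMod R, N.IsSummand M₂ → N.Proj → Subsingleton N)
    (n : ℕ) (N₁ N₂ : FGMod R)
    (hN₁ : IsSyzygyN n M₁ N₁) (hN₂ : IsSyzygyN n M₂ N₂) (hiso : N₁.Iso N₂) :
    M₁.Iso M₂ := by
  induction n generalizing M₁ M₂ N₁ N₂ with
  | zero =>
    obtain ⟨a⟩ := hN₁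
    obtain ⟨b⟩ := hN₂
    obtain ⟨c⟩ := hiso
    exact ⟨(a.trans c).trans b.symm⟩
  | succ n ih =>
    obtain ⟨L₁, hL₁, hr₁⟩ := hN₁
    obtain ⟨L₂, hL₂, hr₂⟩ := hN₂
    have hiso' : L₁.Iso L₂ := ih L₁ L₂ (syzygy_no_proj_summand hL₁ hinj)
      (syzygy_no_proj_summand hL₂ hinj) N₁ N₂ hr₁ hr₂ hiso
    obtain ⟨P₁, f₁, hc₁, ⟨φ₁⟩⟩ := hL₁
    obtain ⟨P₂, f₂, hc₂, ⟨φ₂⟩⟩ := hL₂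
    obtain ⟨ψ⟩ := hiso'
    exact iso_of_ker_iso f₁ f₂ hc₁ hc₂ h₁ h₂ hinj ((φ₁.symm.trans ψ).trans φ₂)
end
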